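/- The map g is area-preserving: g : M → M is a bijection and is measure preserving with respect to the measure on M induced by Lebesgue measure on ℝ² via the quotient map q (the pushforward of this measure under g equals itself). -/

import Mathlib

open Real MeasureTheory

noncomputable section

instance : Fact (0 < 2 * π) := ⟨by positivity⟩

/-- The cylinder `(ℝ/2πℤ) × ℝ`. -/
abbrev Cyl : Type := AddCircle (2 * π) × ℝ

/-- The quotient map `ℝ² → Cyl`. -/
def q2 (v : ℝ × ℝ) : Cyl := ((v.1 : AddCircle (2 * π)), v.2)

/-- The lift of a point of the cylinder to the fundamental domain `[-π, π) × ℝ`. -/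
def cylLift (m : Cyl) : ℝ × ℝ :=
  ((AddCircle.equivIco (2 * π) (-π) m.1 : ℝ), m.2)

/-- The Euclidean norm on `ℝ × ℝ`. -/
def eNorm (v : ℝ × ℝ) : ℝ := Real.sqrt (v.1 ^ 2 + v.2 ^ 2)

/-- Rotation of the plane about the origin by angle `a`. -/
def rot (a : ℝ) (v : ℝ × ℝ) : ℝ × ℝ :=
  (Real.cos a * v.1 - Real.sin a * v.2, Real.sin a * v.1 + Real.cos a * v.2)

/-- The planar twist map: rotate `v` about the origin by the angle `α (eNorm v)`. -/
def twist (α : ℝ → ℝ) (v : ℝ × ℝ) : ℝ × ℝ := rot (α (eNorm v)) v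

/-- The twist map descended to the cylinder. -/
def psi (α : ℝ → ℝ) (m : Cyl) : Cyl := q2 (twist α (cylLift m))

/-- The half rotation `(θ, s) ↦ (θ + π, s)` of the cylinder. -/
def phi (m : Cyl) : Cyl := (m.1 + ((π : ℝ) : AddCircle (2 * π)), m.2)

/-- The composition `g = φ ∘ ψ`. -/
def gmap (α : ℝ → ℝ) : Cyl → Cyl := phi ∘ psi α

/-- The image in the cylinder of the open Euclidean unit disk centered at the origin. -/
def Dset : Set Cyl := q2 '' {v : ℝ × ℝ | eNorm v < 1}

/-- The distance on the cylinder induced by the Euclidean metric on `ℝ²`. -/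
def cylDist (x y : Cyl) : ℝ := Real.sqrt (dist x.1 y.1 ^ 2 + dist x.2 y.2 ^ 2)

/-- The hypotheses on the twist angle profile `α`: continuous, non-increasing on `[0, ∞)`,
greater than `0.2` on `[0, 0.7]` and vanishing on `[0.9, ∞)`. -/
structure TwistAngle (α : ℝ → ℝ) : Prop where
  cont : Continuous α
  anti : AntitoneOn α (Set.Ici 0)
  big : ∀ r ∈ Set.Icc (0 : ℝ) 0.7, 0.2 < α r
  zero : ∀ r : ℝ, 0.9 ≤ r → α r = 0

/-- The measure on the cylinder induced by Lebesgue measure on ℝ² via the quotient map: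
the pushforward under q of Lebesgue measure restricted to the fundamental domain
[-π, π) × ℝ. -/
def cylMeasure : Measure Cyl :=
  Measure.map q2 (volume.restrict (Set.Ico (-π) π ×ˢ (Set.univ : Set ℝ)))

/-! ### Auxiliary lemmas -/

section Aux
open Set Function

/-! #### Basic properties of `rot`, `eNorm`, `twist` -/

lemma rot_zero' (v : ℝ × ℝ) : rot 0 v = v := by simp [rot]

lemma rot_rot' (a b : ℝ) (v : ℝ × ℝ) : rot a (rot b v) = rot (a + b) v := by
  simp only [rot, Real.cos_add, Real.sin_add]; exact Prod.ext (by ring) (by ring)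

lemma eNorm_rot (a : ℝ) (v : ℝ × ℝ) : eNorm (rot a v) = eNorm v := by
  simp only [eNorm, rot]
  congr 1
  linear_combination (v.1 ^ 2 + v.2 ^ 2) * Real.sin_sq_add_cos_sq a

lemma eNorm_twist (α : ℝ → ℝ) (v : ℝ × ℝ) : eNorm (twist α v) = eNorm v := by
  rw [twist, eNorm_rot]

lemma twist_twist_neg (α : ℝ → ℝ) (v : ℝ × ℝ) :
    twist (fun r => -(α r)) (twist α v) = v := by
  rw [twist, eNorm_twist, twist, rot_rot', neg_add_cancel, rot_zero']

lemma twist_neg_twist (α : ℝ → ℝ) (v : ℝ × ℝ) :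
    twist α (twist (fun r => -(α r)) v) = v := by
  have h := twist_twist_neg (fun r => -(α r)) v
  simp only [neg_neg] at h
  exact h

lemma continuous_eNorm : Continuous eNorm :=
  Real.continuous_sqrt.comp (((continuous_fst.pow 2).add (continuous_snd.pow 2)))

lemma continuous_twist {α : ℝ → ℝ} (hα : Continuous α) : Continuous (twist α) := by
  have h : Continuous fun v : ℝ × ℝ => α (eNorm v) := hα.comp continuous_eNorm
  exact ((((Real.continuous_cos.comp h).mul continuous_fst).sub
    ((Real.continuous_sin.comp h).mul continuous_snd)).prodMk
    (((Real.continuous_sin.comp h).mul continuous_fst).add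
    ((Real.continuous_cos.comp h).mul continuous_snd)))

lemma abs_fst_le_eNorm (v : ℝ × ℝ) : |v.1| ≤ eNorm v := by
  rw [eNorm, ← Real.sqrt_sq_eq_abs]
  exact Real.sqrt_le_sqrt (by nlinarith [sq_nonneg v.2])

/-! #### The twist map preserves Lebesgue measure on the plane -/

lemma map_polar_symm :
    Measure.map (⇑polarCoord.symm)
      ((volume.restrict polarCoord.target).withDensity fun p => ENNReal.ofReal |p.1|) =
      volume := by
  set B : ℝ × ℝ → ℝ × ℝ →L[ℝ] ℝ × ℝ := fun p =>
    LinearMap.toContinuousLinearMap (Matrix.toLin (Module.Basis.finTwoProd ℝ) (Module.Basis.finTwoProd ℝ)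
      !![cos p.2, -p.1 * sin p.2; sin p.2, p.1 * cos p.2]) with hB
  have B_det : ∀ p, (B p).det = p.1 := by
    intro p
    conv_rhs => rw [← one_mul p.1, ← cos_sq_add_sin_sq p.2]
    simp only [hB, neg_mul, LinearMap.det_toContinuousLinearMap, LinearMap.det_toLin,
      Matrix.det_fin_two_of, sub_neg_eq_add]
    ring
  have hderiv : ∀ p ∈ polarCoord.target,
      HasFDerivWithinAt (⇑polarCoord.symm) (B p) polarCoord.target p := fun p _ =>
    (hasFDerivAt_polarCoord_symm p).hasFDerivWithinAt
  have hmeas : Measurable (⇑polarCoord.symm) := by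
    have : Continuous (⇑polarCoord.symm) := by
      rw [show (⇑polarCoord.symm) = fun p : ℝ × ℝ => (p.1 * cos p.2, p.1 * sin p.2) from
        funext fun p => polarCoord_symm_apply p]
      exact (continuous_fst.mul (Real.continuous_cos.comp continuous_snd)).prodMk
        (continuous_fst.mul (Real.continuous_sin.comp continuous_snd))
    exact this.measurable
  have hinj : Set.InjOn (⇑polarCoord.symm) polarCoord.target := by
    have := polarCoord.symm.injOn
    rwa [OpenPartialHomeomorph.symm_source] at this
  have key := map_withDensity_abs_det_fderiv_eq_addHaar volume
    polarCoord.open_target.measurableSet.nullMeasurableSet hderiv hinj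
  have hfun : (fun p => ENNReal.ofReal |(B p).det|) = fun p : ℝ × ℝ => ENNReal.ofReal |p.1| := by
    funext p; rw [B_det]
  rw [hfun] at key
  rw [key, OpenPartialHomeomorph.symm_image_target_eq_source,
    Measure.restrict_congr_set polarCoord_source_ae_eq_univ, Measure.restrict_univ]

lemma withDensity_fst_prod {μ ν : Measure ℝ} [SigmaFinite μ] [SigmaFinite ν] {f : ℝ → ℝ}
    (hf : Measurable f) :
    (μ.prod ν).withDensity (fun p => ENNReal.ofReal (f p.1)) =
      (μ.withDensity fun x => ENNReal.ofReal (f x)).prod ν := by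
  refine (Measure.prod_eq fun s t hs ht => ?_).symm
  rw [withDensity_apply _ (hs.prod ht), ← Measure.prod_restrict,
    lintegral_prod (fun p : ℝ × ℝ => ENNReal.ofReal (f p.1))
      ((hf.comp measurable_fst).ennreal_ofReal.aemeasurable)]
  simp only [lintegral_const, Measure.restrict_apply MeasurableSet.univ, Set.univ_inter]
  rw [lintegral_mul_const _ hf.ennreal_ofReal, withDensity_apply _ hs]

/-- The Haar measure on the circle. -/
abbrev volA : Measure (AddCircle (2 * π)) := volume

lemma mk_measurePreserving_Ioo :
    MeasurePreserving ((↑) : ℝ → AddCircle (2 * π)) (volume.restrict (Set.Ioo (-π) π)) volA := by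
  have h := AddCircle.measurePreserving_mk (2 * π) (-π)
  rw [show -π + 2 * π = π by ring] at h
  rwa [Measure.restrict_congr_set Ioo_ae_eq_Ioc]

lemma mk_measurePreserving_Ico :
    MeasurePreserving ((↑) : ℝ → AddCircle (2 * π)) (volume.restrict (Set.Ico (-π) π)) volA := by
  have h := AddCircle.measurePreserving_mk (2 * π) (-π)
  rw [show -π + 2 * π = π by ring] at h
  rwa [Measure.restrict_congr_set Ico_ae_eq_Ioc]

/-- The radial part of the polar-coordinates measure. -/
abbrev μr : Measure ℝ := (volume.restrict (Set.Ioi 0)).withDensity fun r => ENNReal.ofReal |r|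

lemma nu_eq_prod :
    ((volume.restrict polarCoord.target).withDensity fun p => ENNReal.ofReal |p.1|) =
      μr.prod (volume.restrict (Set.Ioo (-π) π)) := by
  rw [polarCoord_target, Measure.volume_eq_prod, ← Measure.prod_restrict,
    withDensity_fst_prod measurable_abs]

/-- The map `ℝ² → ℝ × circle` wrapping the angular coordinate. -/
def m1 (p : ℝ × ℝ) : ℝ × AddCircle (2 * π) := (p.1, (p.2 : AddCircle (2 * π)))

lemma measurable_m1 : Measurable m1 :=
  measurable_fst.prodMk (((AddCircle.continuous_mk' (2 * π)).comp continuous_snd).measurable)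

lemma map_m1 : Measure.map m1 (μr.prod (volume.restrict (Set.Ioo (-π) π))) = μr.prod volA :=
  ((MeasurePreserving.id μr).prod mk_measurePreserving_Ioo).map_eq

/-- The twist in polar coordinates: a skew translation in the angular variable. -/
def Sc (α : ℝ → ℝ) (z : ℝ × AddCircle (2 * π)) : ℝ × AddCircle (2 * π) :=
  (z.1, z.2 + ((α z.1 : ℝ) : AddCircle (2 * π)))

lemma Sc_measurePreserving {α : ℝ → ℝ} (hα : Continuous α) :
    MeasurePreserving (Sc α) (μr.prod volA) (μr.prod volA) := by
  have hcont : Continuous fun z : ℝ × AddCircle (2 * π) =>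
      z.2 + ((α z.1 : ℝ) : AddCircle (2 * π)) :=
    continuous_snd.add ((AddCircle.continuous_mk' (2 * π)).comp (hα.comp continuous_fst))
  exact MeasurePreserving.skew_product (MeasurePreserving.id μr)
    (g := fun r θ => θ + ((α r : ℝ) : AddCircle (2 * π)))
    hcont.measurable
    (Filter.Eventually.of_forall fun r => (measurePreserving_add_right volA _).map_eq)

/-- Cosine descended to the circle. -/
def cosA : AddCircle (2 * π) → ℝ := Real.cos_periodic.lift
/-- Sine descended to the circle. -/
def sinA : AddCircle (2 * π) → ℝ := Real.sin_periodic.lift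

lemma continuous_cosA : Continuous cosA :=
  isQuotientMap_quotient_mk'.continuous_iff.mpr Real.continuous_cos
lemma continuous_sinA : Continuous sinA :=
  isQuotientMap_quotient_mk'.continuous_iff.mpr Real.continuous_sin

/-- The polar parametrization, with wrapped angular variable. -/
def Pc (z : ℝ × AddCircle (2 * π)) : ℝ × ℝ := (z.1 * cosA z.2, z.1 * sinA z.2)

lemma continuous_Pc : Continuous Pc :=
  (continuous_fst.mul (continuous_cosA.comp continuous_snd)).prodMk
    (continuous_fst.mul (continuous_sinA.comp continuous_snd))

lemma Pc_m1 : Pc ∘ m1 = ⇑polarCoord.symm := by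
  funext p
  simp only [Pc, m1, comp_apply, polarCoord_symm_apply]
  rfl

lemma twist_Pc {α : ℝ → ℝ} (z : ℝ × AddCircle (2 * π)) (hz : 0 < z.1) :
    twist α (Pc z) = Pc (Sc α z) := by
  obtain ⟨r, θbar⟩ := z
  induction θbar using QuotientAddGroup.induction_on with
  | H θ =>
    simp only at hz
    have hc : cosA ((θ : AddCircle (2 * π))) = Real.cos θ := Real.cos_periodic.lift_coe θ
    have hs : sinA ((θ : AddCircle (2 * π))) = Real.sin θ := Real.sin_periodic.lift_coe θ
    have hnorm : eNorm (r * Real.cos θ, r * Real.sin θ) = r := by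
      have h1 : (r * Real.cos θ) ^ 2 + (r * Real.sin θ) ^ 2 = r ^ 2 := by
        linear_combination r ^ 2 * Real.sin_sq_add_cos_sq θ
      simp only [eNorm]
      rw [h1, Real.sqrt_sq hz.le]
    have hmk : ((θ : ℝ) : AddCircle (2 * π)) + ((α r : ℝ) : AddCircle (2 * π)) =
        ((θ + α r : ℝ) : AddCircle (2 * π)) := by
      rw [← QuotientAddGroup.mk_add]
    have hc2 : cosA (((θ + α r : ℝ)) : AddCircle (2 * π)) = Real.cos (θ + α r) :=
      Real.cos_periodic.lift_coe _
    have hs2 : sinA (((θ + α r : ℝ)) : AddCircle (2 * π)) = Real.sin (θ + α r) :=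
      Real.sin_periodic.lift_coe _
    simp only [Pc, Sc, hc, hs, hmk, hc2, hs2]
    simp only [twist, hnorm, rot]
    exact Prod.ext (by rw [Real.cos_add]; ring) (by rw [Real.sin_add]; ring)

lemma mur_Iic : μr (Set.Iic 0) = 0 := by
  rw [withDensity_apply _ measurableSet_Iic, Measure.restrict_restrict measurableSet_Iic,
    Set.Iic_inter_Ioi, Set.Ioc_self, Measure.restrict_empty, lintegral_zero_measure]

lemma ae_pos_fst : ∀ᵐ z ∂(μr.prod volA), 0 < z.1 := by
  rw [ae_iff]
  have h : {z : ℝ × AddCircle (2 * π) | ¬ 0 < z.1} = (Set.Iic 0) ×ˢ Set.univ := by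
    ext z; simp [Set.mem_prod, not_lt]
  rw [h, Measure.prod_prod, mur_Iic, zero_mul]

theorem twist_measurePreserving {α : ℝ → ℝ} (hα : Continuous α) :
    MeasurePreserving (twist α) (volume : Measure (ℝ × ℝ)) volume := by
  refine ⟨(continuous_twist hα).measurable, ?_⟩
  have h1 : Measure.map m1
      ((volume.restrict polarCoord.target).withDensity fun p => ENNReal.ofReal |p.1|) =
      μr.prod volA := by rw [nu_eq_prod]; exact map_m1
  have hPc : Measure.map Pc (μr.prod volA) = volume := by
    rw [← h1, Measure.map_map continuous_Pc.measurable measurable_m1, Pc_m1, map_polar_symm]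
  have hae : twist α ∘ Pc =ᵐ[μr.prod volA] Pc ∘ Sc α :=
    ae_pos_fst.mono fun z hz => twist_Pc z hz
  calc Measure.map (twist α) volume
      = Measure.map (twist α) (Measure.map Pc (μr.prod volA)) := by rw [hPc]
    _ = Measure.map (twist α ∘ Pc) (μr.prod volA) :=
        Measure.map_map (continuous_twist hα).measurable continuous_Pc.measurable
    _ = Measure.map (Pc ∘ Sc α) (μr.prod volA) := Measure.map_congr hae
    _ = Measure.map Pc (Measure.map (Sc α) (μr.prod volA)) :=
        (Measure.map_map continuous_Pc.measurable (Sc_measurePreserving hα).measurable).symm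
    _ = Measure.map Pc (μr.prod volA) := by rw [(Sc_measurePreserving hα).map_eq]
    _ = volume := hPc

/-! #### The fundamental strip -/

/-- The fundamental strip `[-π, π) × ℝ`. -/
def strip : Set (ℝ × ℝ) := Set.Ico (-π) π ×ˢ (Set.univ : Set ℝ)

lemma strip_measurableSet : MeasurableSet strip :=
  measurableSet_Ico.prod MeasurableSet.univ

lemma ofNine_lt_pi : (0.9 : ℝ) < π := by
  have := Real.pi_gt_three
  norm_num
  linarith

lemma twist_mapsTo {α : ℝ → ℝ} (hz : ∀ r : ℝ, 0.9 ≤ r → α r = 0) :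
    Set.MapsTo (twist α) strip strip := by
  intro v hv
  by_cases h : eNorm v < 0.9
  · have h2 : eNorm (twist α v) < 0.9 := by rw [eNorm_twist]; exact h
    have h3 : |(twist α v).1| < 0.9 := lt_of_le_of_lt (abs_fst_le_eNorm _) h2
    obtain ⟨h4, h5⟩ := abs_lt.mp h3
    exact ⟨⟨by linarith [ofNine_lt_pi], by linarith [ofNine_lt_pi]⟩, Set.mem_univ _⟩
  · have h0 : α (eNorm v) = 0 := hz _ (not_lt.mp h)
    rw [twist, h0, rot_zero']
    exact hv

lemma twist_preimage_strip {α : ℝ → ℝ} (hz : ∀ r : ℝ, 0.9 ≤ r → α r = 0) :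
    twist α ⁻¹' strip = strip := by
  have hzneg : ∀ r : ℝ, 0.9 ≤ r → -(α r) = 0 := fun r hr => by rw [hz r hr, neg_zero]
  apply subset_antisymm
  · intro v hv
    have h := twist_mapsTo hzneg hv
    rwa [twist_twist_neg] at h
  · exact fun v hv => twist_mapsTo hz hv

lemma map_twist_strip {α : ℝ → ℝ} (hα : Continuous α) (hz : ∀ r : ℝ, 0.9 ≤ r → α r = 0) :
    Measure.map (twist α) (volume.restrict strip) = volume.restrict strip := by
  have h := (twist_measurePreserving hα).restrict_preimage (s := strip) strip_measurableSet
  rw [twist_preimage_strip hz] at h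
  exact h.map_eq

/-! #### The quotient map and the lift -/

lemma measurable_q2 : Measurable q2 :=
  (((AddCircle.continuous_mk' (2 * π)).comp continuous_fst).measurable).prodMk measurable_snd

lemma measurable_cylLift : Measurable cylLift :=
  (measurable_subtype_coe.comp
    ((AddCircle.measurableEquivIco (2 * π) (-π)).measurable.comp measurable_fst)).prodMk
    measurable_snd

lemma coe_equivIco_coe (z : AddCircle (2 * π)) :
    (((AddCircle.equivIco (2 * π) (-π) z : ℝ)) : AddCircle (2 * π)) = z := by
  have h := (AddCircle.equivIco (2 * π) (-π)).symm_apply_apply z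
  rwa [AddCircle.equivIco, QuotientAddGroup.equivIcoMod_symm_apply] at h

lemma q2_cylLift (m : Cyl) : q2 (cylLift m) = m := by
  apply Prod.ext
  · exact coe_equivIco_coe m.1
  · rfl

lemma cylLift_q2 (v : ℝ × ℝ) (hv : v ∈ strip) : cylLift (q2 v) = v := by
  apply Prod.ext
  · show ((AddCircle.equivIco (2 * π) (-π) ((v.1 : ℝ) : AddCircle (2 * π)) : ℝ)) = v.1
    rw [AddCircle.equivIco, QuotientAddGroup.equivIcoMod_coe]
    exact (toIcoMod_eq_self (by positivity)).mpr (by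
      rw [show -π + 2 * π = π by ring]; exact hv.1)
  · rfl

lemma cylLift_mem_strip (m : Cyl) : cylLift m ∈ strip := by
  have h := (AddCircle.equivIco (2 * π) (-π) m.1).2
  exact ⟨⟨h.1, by have h2 : (cylLift m).1 < -π + 2 * π := h.2; linarith⟩, Set.mem_univ _⟩

lemma map_cylLift : Measure.map cylLift cylMeasure = volume.restrict strip := by
  rw [cylMeasure, Measure.map_map measurable_cylLift measurable_q2]
  have hae : cylLift ∘ q2 =ᵐ[volume.restrict strip] id := by
    rw [Filter.EventuallyEq, ae_restrict_iff' strip_measurableSet]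
    exact Filter.Eventually.of_forall fun v hv => cylLift_q2 v hv
  rw [show (Set.Ico (-π) π ×ˢ (Set.univ : Set ℝ)) = strip from rfl,
    Measure.map_congr hae, Measure.map_id]

/-! #### `psi` and `phi` are measure preserving -/

lemma measurable_psi {α : ℝ → ℝ} (hα : Continuous α) : Measurable (psi α) :=
  measurable_q2.comp ((continuous_twist hα).measurable.comp measurable_cylLift)

lemma psi_measurePreserving {α : ℝ → ℝ} (hα : Continuous α)
    (hz : ∀ r : ℝ, 0.9 ≤ r → α r = 0) :
    MeasurePreserving (psi α) cylMeasure cylMeasure := by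
  refine ⟨measurable_psi hα, ?_⟩
  have hpsi : psi α = q2 ∘ (twist α ∘ cylLift) := rfl
  rw [hpsi, ← Measure.map_map measurable_q2
      ((continuous_twist hα).measurable.comp measurable_cylLift),
    ← Measure.map_map (continuous_twist hα).measurable measurable_cylLift,
    map_cylLift, map_twist_strip hα hz, cylMeasure]
  rfl

lemma cylMeasure_eq_prod : cylMeasure = volA.prod (volume : Measure ℝ) := by
  rw [cylMeasure, Measure.volume_eq_prod, ← Measure.prod_restrict, Measure.restrict_univ]
  exact (mk_measurePreserving_Ico.prod (MeasurePreserving.id (volume : Measure ℝ))).map_eq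

lemma phi_measurePreserving : MeasurePreserving phi cylMeasure cylMeasure := by
  rw [cylMeasure_eq_prod]
  exact (measurePreserving_add_right volA ((π : ℝ) : AddCircle (2 * π))).prod
    (MeasurePreserving.id (volume : Measure ℝ))

/-! #### Bijectivity -/

lemma phi_bijective : Function.Bijective phi := by
  rw [Function.bijective_iff_has_inverse]
  refine ⟨fun m => (m.1 - ((π : ℝ) : AddCircle (2 * π)), m.2), fun m => ?_, fun m => ?_⟩
  · simp [phi]
  · simp [phi]

lemma psi_inv {α : ℝ → ℝ} (hz : ∀ r : ℝ, 0.9 ≤ r → α r = 0) (m : Cyl) :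
    psi (fun r => -(α r)) (psi α m) = m := by
  have hmem : twist α (cylLift m) ∈ strip := twist_mapsTo hz (cylLift_mem_strip m)
  show q2 (twist (fun r => -(α r)) (cylLift (q2 (twist α (cylLift m))))) = m
  rw [cylLift_q2 _ hmem, twist_twist_neg, q2_cylLift]

lemma psi_inv' {α : ℝ → ℝ} (hz : ∀ r : ℝ, 0.9 ≤ r → α r = 0) (m : Cyl) :
    psi α (psi (fun r => -(α r)) m) = m := by
  have hzneg : ∀ r : ℝ, 0.9 ≤ r → -(α r) = 0 := fun r hr => by rw [hz r hr, neg_zero]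
  have hmem : twist (fun r => -(α r)) (cylLift m) ∈ strip :=
    twist_mapsTo hzneg (cylLift_mem_strip m)
  show q2 (twist α (cylLift (q2 (twist (fun r => -(α r)) (cylLift m))))) = m
  rw [cylLift_q2 _ hmem, twist_neg_twist, q2_cylLift]

lemma psi_bijective {α : ℝ → ℝ} (hz : ∀ r : ℝ, 0.9 ≤ r → α r = 0) :
    Function.Bijective (psi α) := by
  rw [Function.bijective_iff_has_inverse]
  exact ⟨psi (fun r => -(α r)), psi_inv hz, psi_inv' hz⟩

end Aux

/-- g is an area-preserving bijection of the cylinder. -/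
theorem gmap_measurePreserving (α : ℝ → ℝ) (hα : TwistAngle α) :
    Function.Bijective (gmap α) ∧
    MeasurePreserving (gmap α) cylMeasure cylMeasure := by
  constructor
  · exact phi_bijective.comp (psi_bijective hα.zero)
  · exact phi_measurePreserving.comp (psi_measurePreserving hα.cont hα.zero)
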